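/- Let λ ∈ (0,1] and let (p_q)_{q≥0} and (p̂_q)_{q≥0} be [0,1]-valued random variables on a probability space such that E[(p_q)² − (p̂_q)²] ≥ 0 for all q, and such that the telescoping bound ∑_{q≥0} λ(1−λ)^q E[(p_q)² − (p̂_q)²] ≤ ∑_{q≥0} λ(1−λ)^q E[(p̂_{q+1})² − (p̂_q)²] + 2C/n holds for constants C > 0, n ≥ 1. Then ∑_{q≥0} λ(1−λ)^q E[|p_q − p̂_q|] ≤ (λ + 2C/n)^{1/2}. -/

import Mathlib

open MeasureTheory

lemma aux_int {Ω : Type*} [m0 : MeasurableSpace Ω] (μ : Measure Ω) [IsProbabilityMeasure μ]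
    (f : Ω → ℝ) (hf : Measurable f) (B : ℝ)
    (hb : ∀ᵐ ω ∂μ, |f ω| ≤ B) : Integrable f μ :=
  ⟨hf.aestronglyMeasurable, HasFiniteIntegral.of_bounded (C := B)
    (by simpa [Real.norm_eq_abs] using hb)⟩

lemma aux_jensen {Ω : Type*} [m0 : MeasurableSpace Ω] (μ : Measure Ω) [IsProbabilityMeasure μ]
    (f : Ω → ℝ) (hf : Measurable f) (hb : ∀ᵐ ω ∂μ, |f ω| ≤ 1) :
    (∫ ω, |f ω| ∂μ) ^ 2 ≤ ∫ ω, (f ω) ^ 2 ∂μ := by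
  set m := ∫ ω, |f ω| ∂μ with hm
  have habs : Integrable (fun ω => |f ω|) μ :=
    aux_int μ _ hf.abs 1 (by filter_upwards [hb] with ω h using by simpa [abs_abs] using h)
  have hsq : Integrable (fun ω => (f ω) ^ 2) μ := by
    refine aux_int μ _ (hf.pow_const 2) 1 ?_
    filter_upwards [hb] with ω h
    rw [abs_pow]
    exact pow_le_one₀ (abs_nonneg _) h
  have h0 : 0 ≤ ∫ ω, (|f ω| - m) ^ 2 ∂μ := integral_nonneg fun ω => sq_nonneg _
  have hexp : ∫ ω, (|f ω| - m) ^ 2 ∂μ = (∫ ω, (f ω) ^ 2 ∂μ) - m ^ 2 := by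
    have heq : ∀ ω, (|f ω| - m) ^ 2 = (f ω) ^ 2 - (2 * m * |f ω| - m ^ 2) := by
      intro ω
      have : |f ω| ^ 2 = f ω ^ 2 := sq_abs _
      nlinarith [this]
    have h1 : Integrable (fun ω => 2 * m * |f ω| - m ^ 2) μ :=
      (habs.const_mul (2 * m)).sub (integrable_const _)
    have h2 : Integrable (fun ω => 2 * m * |f ω|) μ := habs.const_mul (2 * m)
    simp_rw [heq]
    rw [integral_sub hsq h1, integral_sub h2 (integrable_const _),
      integral_const_mul, integral_const, probReal_univ]
    simp [← hm]
    ring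
  nlinarith [h0, hexp]

lemma aux_mul {Ω : Type*} {m : MeasurableSpace Ω} [m0 : MeasurableSpace Ω] (hm : m ≤ m0)
    (μ : Measure Ω) [IsProbabilityMeasure μ] (f g : Ω → ℝ)
    (hf : Measurable f) (hg : Measurable g)
    (hfb : ∀ᵐ ω ∂μ, |f ω| ≤ 1) (hgb : ∀ᵐ ω ∂μ, |g ω| ≤ 1)
    (hgm : StronglyMeasurable[m] g)
    (hmart : μ[f | m] =ᵐ[μ] g) :
    ∫ ω, g ω * f ω ∂μ = ∫ ω, (g ω) ^ 2 ∂μ := by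
  have hfi : Integrable f μ := aux_int μ f hf 1 hfb
  have hgfi : Integrable (g * f) μ := by
    refine aux_int μ _ (hg.mul hf) 1 ?_
    filter_upwards [hfb, hgb] with ω h1 h2
    calc |g ω * f ω| = |g ω| * |f ω| := abs_mul _ _
    _ ≤ 1 * 1 := mul_le_mul h2 h1 (abs_nonneg _) zero_le_one
    _ = 1 := one_mul 1
  have hce : μ[g * f | m] =ᵐ[μ] g * μ[f | m] :=
    condExp_stronglyMeasurable_mul_of_bound hm hgm hfi 1
      (by simpa [Real.norm_eq_abs] using hgb)
  have h1 : ∫ ω, g ω * f ω ∂μ = ∫ ω, (μ[g * f | m]) ω ∂μ :=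
    (integral_condExp hm).symm
  rw [h1]
  refine integral_congr_ae ?_
  filter_upwards [hce, hmart] with ω h1 h2
  rw [h1]
  simp only [Pi.mul_apply, h2, sq]

/-- Cauchy–Schwarz for weighted series. -/
lemma aux_CS (w c : ℕ → ℝ) (hw : ∀ q, 0 ≤ w q) (hc : ∀ q, 0 ≤ c q) (hc1 : ∀ q, c q ≤ 1)
    (hwS : Summable w) (hw1 : ∑' q, w q ≤ 1)
    (hS : Summable fun q => w q * c q) :
    ∑' q, w q * Real.sqrt (c q) ≤ Real.sqrt (∑' q, w q * c q) := by
  set S := ∑' q, w q * c q with hSdef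
  have hS0 : 0 ≤ S := tsum_nonneg fun q => mul_nonneg (hw q) (hc q)
  have hsummable : Summable fun q => w q * Real.sqrt (c q) := by
    refine Summable.of_nonneg_of_le
      (fun q => mul_nonneg (hw q) (Real.sqrt_nonneg _)) (fun q => ?_) hwS
    calc w q * Real.sqrt (c q) ≤ w q * 1 := by
          refine mul_le_mul_of_nonneg_left ?_ (hw q)
          rw [show (1:ℝ) = Real.sqrt 1 by simp]
          exact Real.sqrt_le_sqrt (hc1 q)
    _ = w q := mul_one _
  refine Summable.tsum_le_of_sum_le hsummable fun F => ?_
  have h1 : ∀ q ∈ F, w q * Real.sqrt (c q) = Real.sqrt (w q) * Real.sqrt (w q * c q) := by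
    intro q _
    rw [← Real.sqrt_mul (hw q), ← mul_assoc, Real.sqrt_mul (mul_nonneg (hw q) (hw q)),
      Real.sqrt_mul_self (hw q)]
  rw [Finset.sum_congr rfl h1]
  have hCS := Finset.sum_mul_sq_le_sq_mul_sq F (fun q => Real.sqrt (w q))
    (fun q => Real.sqrt (w q * c q))
  have hsq1 : ∀ q, Real.sqrt (w q) ^ 2 = w q := fun q => Real.sq_sqrt (hw q)
  have hsq2 : ∀ q, Real.sqrt (w q * c q) ^ 2 = w q * c q :=
    fun q => Real.sq_sqrt (mul_nonneg (hw q) (hc q))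
  simp only [hsq1, hsq2] at hCS
  have hFw : ∑ q ∈ F, w q ≤ 1 :=
    le_trans (Summable.sum_le_tsum F (fun q _ => hw q) hwS) hw1
  have hFc : ∑ q ∈ F, w q * c q ≤ S :=
    Summable.sum_le_tsum F (fun q _ => mul_nonneg (hw q) (hc q)) hS
  have hnn : 0 ≤ ∑ q ∈ F, Real.sqrt (w q) * Real.sqrt (w q * c q) :=
    Finset.sum_nonneg fun q _ => mul_nonneg (Real.sqrt_nonneg _) (Real.sqrt_nonneg _)
  refine (Real.le_sqrt hnn hS0).mpr ?_
  have hFw0 : 0 ≤ ∑ q ∈ F, w q := Finset.sum_nonneg fun q _ => hw q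
  nlinarith [hCS, hFw, hFc, hFw0]

/-- the telescoping bound. -/
lemma aux_tel (lam : ℝ) (hlam0 : 0 < lam) (hlam1 : lam ≤ 1) (b : ℕ → ℝ)
    (hb0 : ∀ q, 0 ≤ b q) (hb1 : ∀ q, b q ≤ 1) :
    ∑' q : ℕ, lam * (1 - lam) ^ q * (b (q + 1) - b q) ≤ lam := by
  have h0 : (0:ℝ) ≤ 1 - lam := by linarith
  have h1 : 1 - lam < 1 := by linarith
  have hg : Summable fun q : ℕ => (1 - lam) ^ q := summable_geometric_of_lt_one h0 h1
  have hw : ∀ q : ℕ, 0 ≤ lam * (1 - lam) ^ q :=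
    fun q => mul_nonneg hlam0.le (pow_nonneg h0 q)
  have hbd : ∀ (f : ℕ → ℕ), Summable fun q => lam * (1 - lam) ^ q * b (f q) := by
    intro f
    refine Summable.of_nonneg_of_le (fun q => mul_nonneg (hw q) (hb0 _))
      (fun q => ?_) (hg.mul_left lam)
    calc lam * (1 - lam) ^ q * b (f q) ≤ lam * (1 - lam) ^ q * 1 :=
      mul_le_mul_of_nonneg_left (hb1 _) (hw q)
    _ = lam * (1 - lam) ^ q := mul_one _
  have hA : Summable fun q => lam * (1 - lam) ^ q * b (q + 1) := hbd (fun q => q + 1)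
  have hB : Summable fun q => lam * (1 - lam) ^ q * b q := hbd id
  have hA' : Summable fun q => lam * (1 - lam) ^ (q + 1) * b (q + 1) := by
    have := (hbd (fun q => q + 1)).mul_left (1 - lam)
    refine this.congr fun q => ?_
    ring
  have hsplit : ∑' q : ℕ, lam * (1 - lam) ^ q * b q
      = lam * b 0 + ∑' q : ℕ, lam * (1 - lam) ^ (q + 1) * b (q + 1) := by
    rw [Summable.tsum_eq_zero_add hB]
    simp
  have hstep : ∑' q : ℕ, lam * (1 - lam) ^ q * (b (q + 1) - b q)
      = (∑' q : ℕ, (lam * (1 - lam) ^ q * b (q + 1) - lam * (1 - lam) ^ (q + 1) * b (q + 1)))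
        - lam * b 0 := by
    have e1 : ∀ q : ℕ, lam * (1 - lam) ^ q * (b (q + 1) - b q)
        = lam * (1 - lam) ^ q * b (q + 1) - lam * (1 - lam) ^ q * b q := fun q => by ring
    rw [tsum_congr e1, Summable.tsum_sub hA hB, hsplit, Summable.tsum_sub hA hA']
    ring
  have hbound : (∑' q : ℕ, (lam * (1 - lam) ^ q * b (q + 1) - lam * (1 - lam) ^ (q + 1) * b (q + 1)))
      ≤ ∑' q : ℕ, lam ^ 2 * (1 - lam) ^ q := by
    refine Summable.tsum_le_tsum (fun q => ?_) (hA.sub hA') (hg.mul_left (lam ^ 2))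
    have e2 : lam * (1 - lam) ^ q * b (q + 1) - lam * (1 - lam) ^ (q + 1) * b (q + 1)
        = lam ^ 2 * (1 - lam) ^ q * b (q + 1) := by ring
    rw [e2]
    calc lam ^ 2 * (1 - lam) ^ q * b (q + 1) ≤ lam ^ 2 * (1 - lam) ^ q * 1 :=
      mul_le_mul_of_nonneg_left (hb1 _) (mul_nonneg (sq_nonneg _) (pow_nonneg h0 q))
    _ = lam ^ 2 * (1 - lam) ^ q := mul_one _
  have hgeo : ∑' q : ℕ, lam ^ 2 * (1 - lam) ^ q = lam := by
    rw [tsum_mul_left, tsum_geometric_of_lt_one h0 h1, sub_sub_cancel, sq,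
      mul_assoc, mul_inv_cancel₀ hlam0.ne', mul_one]
  have hb00 : 0 ≤ lam * b 0 := mul_nonneg hlam0.le (hb0 0)
  rw [hstep]
  rw [hgeo] at hbound
  linarith

/-- the discounted-sum estimate. If `p_q, p̂_q` are `[0,1]`-valued with
`E[p_q | p̂_q] = p̂_q`, `E[p_q² − p̂_q²] ≥ 0` and the telescoping bound holds, then
`∑ λ(1−λ)^q E|p_q − p̂_q| ≤ (λ + 2C/n)^{1/2}`. -/
theorem stmt_10 {Ω : Type*} [m0 : MeasurableSpace Ω]
    (μ : Measure Ω) [IsProbabilityMeasure μ]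
    (lam C : ℝ) (n : ℕ) (hlam : lam ∈ Set.Ioc (0 : ℝ) 1) (hC : 0 < C) (hn : 1 ≤ n)
    (p phat : ℕ → Ω → ℝ)
    (hp : ∀ q, Measurable (p q)) (hphat : ∀ q, Measurable (phat q))
    (hp01 : ∀ q, ∀ᵐ ω ∂μ, p q ω ∈ Set.Icc (0 : ℝ) 1)
    (hphat01 : ∀ q, ∀ᵐ ω ∂μ, phat q ω ∈ Set.Icc (0 : ℝ) 1)
    (hmart : ∀ q,
      μ[p q | MeasurableSpace.comap (phat q) inferInstance] =ᵐ[μ] phat q)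
    (hpos : ∀ q, 0 ≤ ∫ ω, ((p q ω) ^ 2 - (phat q ω) ^ 2) ∂μ)
    (htel : (∑' q : ℕ, lam * (1 - lam) ^ q * ∫ ω, ((p q ω) ^ 2 - (phat q ω) ^ 2) ∂μ)
        ≤ (∑' q : ℕ, lam * (1 - lam) ^ q *
              ∫ ω, ((phat (q + 1) ω) ^ 2 - (phat q ω) ^ 2) ∂μ) + 2 * C / n) :
    (∑' q : ℕ, lam * (1 - lam) ^ q * ∫ ω, |p q ω - phat q ω| ∂μ)
      ≤ Real.sqrt (lam + 2 * C / n) := by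
  obtain ⟨hlam0, hlam1⟩ := hlam
  have h1lam0 : (0:ℝ) ≤ 1 - lam := by linarith
  have h1lam1 : 1 - lam < 1 := by linarith
  have hW0 : ∀ q : ℕ, 0 ≤ lam * (1 - lam) ^ q :=
    fun q => mul_nonneg hlam0.le (pow_nonneg h1lam0 q)
  have hWS : Summable fun q : ℕ => lam * (1 - lam) ^ q :=
    (summable_geometric_of_lt_one h1lam0 h1lam1).mul_left lam
  have hWT : ∑' q : ℕ, lam * (1 - lam) ^ q = 1 := by
    rw [tsum_mul_left, tsum_geometric_of_lt_one h1lam0 h1lam1, sub_sub_cancel,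
      mul_inv_cancel₀ hlam0.ne']
  -- a.e. bounds
  have hpb : ∀ q, ∀ᵐ ω ∂μ, |p q ω| ≤ 1 := fun q => by
    filter_upwards [hp01 q] with ω h
    exact abs_le.mpr ⟨by linarith [h.1], h.2⟩
  have hphb : ∀ q, ∀ᵐ ω ∂μ, |phat q ω| ≤ 1 := fun q => by
    filter_upwards [hphat01 q] with ω h
    exact abs_le.mpr ⟨by linarith [h.1], h.2⟩
  have hdb : ∀ q, ∀ᵐ ω ∂μ, |p q ω - phat q ω| ≤ 1 := fun q => by
    filter_upwards [hp01 q, hphat01 q] with ω h1 h2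
    exact abs_le.mpr ⟨by linarith [h1.1, h2.2], by linarith [h1.2, h2.1]⟩
  -- integrability of squares
  have hIpsq : ∀ q, Integrable (fun ω => (p q ω) ^ 2) μ := fun q => by
    refine aux_int μ _ ((hp q).pow_const 2) 1 ?_
    filter_upwards [hpb q] with ω h using by rw [abs_pow]; exact pow_le_one₀ (abs_nonneg _) h
  have hIphsq : ∀ q, Integrable (fun ω => (phat q ω) ^ 2) μ := fun q => by
    refine aux_int μ _ ((hphat q).pow_const 2) 1 ?_
    filter_upwards [hphb q] with ω h using by rw [abs_pow]; exact pow_le_one₀ (abs_nonneg _) h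
  have hIdiff : ∀ q, Integrable (fun ω => (p q ω) ^ 2 - (phat q ω) ^ 2) μ :=
    fun q => (hIpsq q).sub (hIphsq q)
  -- bounds on the integrals
  have hb0 : ∀ q, 0 ≤ ∫ ω, (phat q ω) ^ 2 ∂μ :=
    fun q => integral_nonneg fun ω => sq_nonneg _
  have hb1 : ∀ q, ∫ ω, (phat q ω) ^ 2 ∂μ ≤ 1 := by
    intro q
    calc ∫ ω, (phat q ω) ^ 2 ∂μ ≤ ∫ _, (1:ℝ) ∂μ := by
          refine integral_mono_ae (hIphsq q) (integrable_const 1) ?_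
          filter_upwards [hphb q] with ω h
          calc (phat q ω) ^ 2 = |phat q ω| ^ 2 := (sq_abs _).symm
          _ ≤ 1 := pow_le_one₀ (abs_nonneg _) h
    _ = 1 := by simp
  have hc1 : ∀ q, (∫ ω, ((p q ω) ^ 2 - (phat q ω) ^ 2) ∂μ) ≤ 1 := by
    intro q
    calc ∫ ω, ((p q ω) ^ 2 - (phat q ω) ^ 2) ∂μ ≤ ∫ _, (1:ℝ) ∂μ := by
          refine integral_mono_ae (hIdiff q) (integrable_const 1) ?_
          filter_upwards [hpb q] with ω h
          have h1 : (p q ω) ^ 2 ≤ 1 := by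
            calc (p q ω) ^ 2 = |p q ω| ^ 2 := (sq_abs _).symm
            _ ≤ 1 := pow_le_one₀ (abs_nonneg _) h
          nlinarith [sq_nonneg (phat q ω)]
    _ = 1 := by simp
  have ha0 : ∀ q, 0 ≤ ∫ ω, |p q ω - phat q ω| ∂μ :=
    fun q => integral_nonneg fun ω => abs_nonneg _
  -- key pointwise-in-q estimate: a q ≤ √(c q)
  have hkey : ∀ q, (∫ ω, |p q ω - phat q ω| ∂μ)
      ≤ Real.sqrt (∫ ω, ((p q ω) ^ 2 - (phat q ω) ^ 2) ∂μ) := by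
    intro q
    have hmul : ∫ ω, phat q ω * p q ω ∂μ = ∫ ω, (phat q ω) ^ 2 ∂μ :=
      aux_mul (measurable_iff_comap_le.mp (hphat q)) μ (p q) (phat q) (hp q) (hphat q)
        (hpb q) (hphb q) ((measurable_iff_comap_le.mpr le_rfl).stronglyMeasurable) (hmart q)
    have hJ := aux_jensen μ (fun ω => p q ω - phat q ω) ((hp q).sub (hphat q)) (hdb q)
    have hImul : Integrable (fun ω => phat q ω * p q ω) μ := by
      refine aux_int μ _ ((hphat q).mul (hp q)) 1 ?_
      filter_upwards [hpb q, hphb q] with ω h1 h2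
      calc |phat q ω * p q ω| = |phat q ω| * |p q ω| := abs_mul _ _
      _ ≤ 1 * 1 := mul_le_mul h2 h1 (abs_nonneg _) zero_le_one
      _ = 1 := one_mul 1
    have hvar : ∫ ω, (p q ω - phat q ω) ^ 2 ∂μ
        = ∫ ω, ((p q ω) ^ 2 - (phat q ω) ^ 2) ∂μ := by
      have heq : ∀ ω, (p q ω - phat q ω) ^ 2
          = ((p q ω) ^ 2 - (phat q ω) ^ 2)
            - 2 * (phat q ω * p q ω - (phat q ω) ^ 2) := fun ω => by ring
      have hI2 : Integrable (fun ω => phat q ω * p q ω - (phat q ω) ^ 2) μ :=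
        hImul.sub (hIphsq q)
      have hI3 : Integrable (fun ω => 2 * (phat q ω * p q ω - (phat q ω) ^ 2)) μ :=
        hI2.const_mul 2
      simp_rw [heq]
      rw [integral_sub (hIdiff q) hI3, integral_const_mul, integral_sub hImul (hIphsq q),
        hmul, sub_self, mul_zero, sub_zero]
    refine (Real.le_sqrt (ha0 q) (hpos q)).mpr ?_
    rw [← hvar]
    exact hJ
  -- summability
  have hsumA : Summable fun q : ℕ => lam * (1 - lam) ^ q * ∫ ω, |p q ω - phat q ω| ∂μ := by
    refine Summable.of_nonneg_of_le (fun q => mul_nonneg (hW0 q) (ha0 q)) (fun q => ?_) hWS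
    have ha1 : ∫ ω, |p q ω - phat q ω| ∂μ ≤ 1 := by
      calc ∫ ω, |p q ω - phat q ω| ∂μ ≤ ∫ _, (1:ℝ) ∂μ := by
            refine integral_mono_ae (aux_int μ _ ((hp q).sub (hphat q)).abs 1
              (by filter_upwards [hdb q] with ω h using by simpa [abs_abs] using h))
              (integrable_const 1) (hdb q)
      _ = 1 := by simp
    calc lam * (1 - lam) ^ q * ∫ ω, |p q ω - phat q ω| ∂μ
        ≤ lam * (1 - lam) ^ q * 1 := mul_le_mul_of_nonneg_left ha1 (hW0 q)
    _ = lam * (1 - lam) ^ q := mul_one _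
  have hsumB : Summable fun q : ℕ =>
      lam * (1 - lam) ^ q * Real.sqrt (∫ ω, ((p q ω) ^ 2 - (phat q ω) ^ 2) ∂μ) := by
    refine Summable.of_nonneg_of_le
      (fun q => mul_nonneg (hW0 q) (Real.sqrt_nonneg _)) (fun q => ?_) hWS
    calc lam * (1 - lam) ^ q * Real.sqrt (∫ ω, ((p q ω) ^ 2 - (phat q ω) ^ 2) ∂μ)
        ≤ lam * (1 - lam) ^ q * 1 := by
          refine mul_le_mul_of_nonneg_left ?_ (hW0 q)
          rw [show (1:ℝ) = Real.sqrt 1 by simp]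
          exact Real.sqrt_le_sqrt (hc1 q)
    _ = lam * (1 - lam) ^ q := mul_one _
  have hsumC : Summable fun q : ℕ =>
      lam * (1 - lam) ^ q * ∫ ω, ((p q ω) ^ 2 - (phat q ω) ^ 2) ∂μ := by
    refine Summable.of_nonneg_of_le (fun q => mul_nonneg (hW0 q) (hpos q)) (fun q => ?_) hWS
    calc lam * (1 - lam) ^ q * ∫ ω, ((p q ω) ^ 2 - (phat q ω) ^ 2) ∂μ
        ≤ lam * (1 - lam) ^ q * 1 := mul_le_mul_of_nonneg_left (hc1 q) (hW0 q)
    _ = lam * (1 - lam) ^ q := mul_one _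
  -- Step 1 : pass to √(c q)
  have step1 : (∑' q : ℕ, lam * (1 - lam) ^ q * ∫ ω, |p q ω - phat q ω| ∂μ)
      ≤ ∑' q : ℕ, lam * (1 - lam) ^ q *
          Real.sqrt (∫ ω, ((p q ω) ^ 2 - (phat q ω) ^ 2) ∂μ) :=
    Summable.tsum_le_tsum (fun q => mul_le_mul_of_nonneg_left (hkey q) (hW0 q)) hsumA hsumB
  -- Step 2 : Cauchy–Schwarz on the series
  have step2 : (∑' q : ℕ, lam * (1 - lam) ^ q *
        Real.sqrt (∫ ω, ((p q ω) ^ 2 - (phat q ω) ^ 2) ∂μ))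
      ≤ Real.sqrt (∑' q : ℕ, lam * (1 - lam) ^ q *
          ∫ ω, ((p q ω) ^ 2 - (phat q ω) ^ 2) ∂μ) :=
    aux_CS _ _ hW0 hpos hc1 hWS hWT.le hsumC
  -- Step 3 : the telescoping estimate
  have hrw : ∀ q : ℕ, ∫ ω, ((phat (q + 1) ω) ^ 2 - (phat q ω) ^ 2) ∂μ
      = (∫ ω, (phat (q + 1) ω) ^ 2 ∂μ) - ∫ ω, (phat q ω) ^ 2 ∂μ :=
    fun q => integral_sub (hIphsq (q + 1)) (hIphsq q)
  have step3 : (∑' q : ℕ, lam * (1 - lam) ^ q *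
        ∫ ω, ((p q ω) ^ 2 - (phat q ω) ^ 2) ∂μ) ≤ lam + 2 * C / n := by
    have htel' : (∑' q : ℕ, lam * (1 - lam) ^ q * ∫ ω, ((p q ω) ^ 2 - (phat q ω) ^ 2) ∂μ)
        ≤ (∑' q : ℕ, lam * (1 - lam) ^ q *
            ((∫ ω, (phat (q + 1) ω) ^ 2 ∂μ) - ∫ ω, (phat q ω) ^ 2 ∂μ)) + 2 * C / n := by
      refine le_trans htel ?_
      refine add_le_add (le_of_eq (tsum_congr fun q => ?_)) le_rfl
      rw [hrw q]
    have htel2 := aux_tel lam hlam0 hlam1 (fun q => ∫ ω, (phat q ω) ^ 2 ∂μ) hb0 hb1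
    linarith
  have hfinal : Real.sqrt (∑' q : ℕ, lam * (1 - lam) ^ q *
        ∫ ω, ((p q ω) ^ 2 - (phat q ω) ^ 2) ∂μ) ≤ Real.sqrt (lam + 2 * C / n) :=
    Real.sqrt_le_sqrt step3
  linarith
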